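/- Let there be n ≥ 2 agents with normalized monotone valuations v_1,…,v_n on a finite set M of goods, and suppose some agent i_0 satisfies v_{i_0}(S) = 0 for every S ⊆ M. Then there exists a complete EFX allocation of M, i.e., a partition ⟨X_1,…,X_n⟩ of M such that for all agents i, j and every good g ∈ X_j we have v_i(X_i) ≥ v_i(X_j \ {g}). -/

import Mathlib

open Finset

/-- Auxiliary lemma: starting from any partial EFX allocation (with pool `P`, dummy `i₀`
holding nothing), we can reach a partial EFX allocation where nobody envies any subset of
the pool. Induction on a potential-based measure. -/
theorem efx_aux {G : Type} [DecidableEq G] (M : Finset G) (n : ℕ)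
    (v : Fin n → Finset G → ℝ)
    (hmono : ∀ i, ∀ S T : Finset G, S ⊆ T → v i S ≤ v i T)
    (i₀ : Fin n) (hi₀ : ∀ S : Finset G, S ⊆ M → v i₀ S = 0) :
    ∀ (k : ℕ) (X : Fin n → Finset G) (P : Finset G),
      (∀ i, X i ⊆ M) → (P ⊆ M) →
      (∀ i j, i ≠ j → Disjoint (X i) (X j)) →
      (∀ i, Disjoint (X i) P) →
      (∀ g ∈ M, g ∈ P ∨ ∃ i, g ∈ X i) →
      X i₀ = ∅ →
      (∀ i j, ∀ g ∈ X j, v i (X j \ {g}) ≤ v i (X i)) →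
      ((((Fintype.piFinset (fun _ : Fin n => M.powerset)).image
          (fun Y => ∑ i, v i (Y i))).filter
          (fun t => ∑ i, v i (X i) < t)).card ≤ k) →
      ∃ (X' : Fin n → Finset G) (P' : Finset G),
        (∀ i, X' i ⊆ M) ∧ (P' ⊆ M) ∧
        (∀ i j, i ≠ j → Disjoint (X' i) (X' j)) ∧
        (∀ i, Disjoint (X' i) P') ∧
        (∀ g ∈ M, g ∈ P' ∨ ∃ i, g ∈ X' i) ∧
        X' i₀ = ∅ ∧
        (∀ i j, ∀ g ∈ X' j, v i (X' j \ {g}) ≤ v i (X' i)) ∧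
        (∀ i, ∀ Z ⊆ P', v i Z ≤ v i (X' i)) := by
  classical
  intro k
  induction k using Nat.strong_induction_on with
  | _ k IH =>
    intro X P hXM hPM hdisj hdisjP hcover hX0 hEFX hk
    by_cases hdone : ∀ i, ∀ Z ⊆ P, v i Z ≤ v i (X i)
    · exact ⟨X, P, hXM, hPM, hdisj, hdisjP, hcover, hX0, hEFX, hdone⟩
    · -- there is an envied subset of the pool; pick a cardinality-minimal one
      push_neg at hdone
      obtain ⟨i₁, Z₁, hZ₁P, hZ₁v⟩ := hdone
      set cands : Finset (Finset G) :=
        P.powerset.filter (fun Z => ∃ i, v i (X i) < v i Z) with hcands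
      have hne : cands.Nonempty := by
        refine ⟨Z₁, ?_⟩
        simp only [hcands, mem_filter, mem_powerset]
        exact ⟨hZ₁P, i₁, hZ₁v⟩
      obtain ⟨Z, hZc, hZmin⟩ := cands.exists_min_image Finset.card hne
      rw [hcands, mem_filter, mem_powerset] at hZc
      obtain ⟨hZP, a, haZ⟩ := hZc
      have hZM : Z ⊆ M := hZP.trans hPM
      have hane : a ≠ i₀ := by
        intro h
        rw [h, hX0, hi₀ ∅ (empty_subset M), hi₀ Z hZM] at haZ
        exact lt_irrefl 0 haZ
      -- the new allocation
      set X' : Fin n → Finset G := Function.update X a Z with hX'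
      set P' : Finset G := (P \ Z) ∪ X a with hP'
      have hX'a : X' a = Z := by simp [hX']
      have hX'j : ∀ j, j ≠ a → X' j = X j := by
        intro j hj; simp [hX', Function.update_of_ne hj]
      have hX'M : ∀ j, X' j ⊆ M := by
        intro j
        by_cases hj : j = a
        · rw [hj, hX'a]; exact hZM
        · rw [hX'j j hj]; exact hXM j
      have hP'M : P' ⊆ M := by
        rw [hP']
        exact union_subset ((sdiff_subset).trans hPM) (hXM a)
      have hZdisjX : ∀ j, Disjoint Z (X j) := fun j =>
        ((hdisjP j).mono_right hZP).symm
      have hdisj' : ∀ j l, j ≠ l → Disjoint (X' j) (X' l) := by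
        intro j l hjl
        by_cases hj : j = a
        · subst hj
          rw [hX'a, hX'j l (fun h => hjl h.symm)]
          exact hZdisjX l
        · by_cases hl : l = a
          · subst hl
            rw [hX'a, hX'j j hj]
            exact (hZdisjX j).symm
          · rw [hX'j j hj, hX'j l hl]
            exact hdisj j l hjl
      have hdisjP' : ∀ j, Disjoint (X' j) P' := by
        intro j
        rw [hP']
        by_cases hj : j = a
        · rw [hj, hX'a]
          exact disjoint_union_right.mpr ⟨disjoint_sdiff, hZdisjX a⟩
        · rw [hX'j j hj]
          refine disjoint_union_right.mpr ⟨(hdisjP j).mono_right sdiff_subset, ?_⟩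
          exact hdisj j a hj
      have hcover' : ∀ g ∈ M, g ∈ P' ∨ ∃ j, g ∈ X' j := by
        intro g hg
        rcases hcover g hg with hgP | ⟨j, hgX⟩
        · by_cases hgZ : g ∈ Z
          · exact Or.inr ⟨a, by rw [hX'a]; exact hgZ⟩
          · exact Or.inl (mem_union_left _ (mem_sdiff.mpr ⟨hgP, hgZ⟩))
        · by_cases hj : j = a
          · subst hj
            exact Or.inl (mem_union_right _ hgX)
          · exact Or.inr ⟨j, by rw [hX'j j hj]; exact hgX⟩
      have hX0' : X' i₀ = ∅ := by
        rw [hX'j i₀ (fun h => hane h.symm)]; exact hX0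
      -- key minimality consequence
      have hmin : ∀ j, ∀ W ⊆ P, W.card < Z.card → v j W ≤ v j (X j) := by
        intro j W hWP hWcard
        by_contra hcon
        push_neg at hcon
        have hWc : W ∈ cands := by
          rw [hcands, mem_filter, mem_powerset]
          exact ⟨hWP, j, hcon⟩
        exact absurd (hZmin W hWc) (not_le.mpr hWcard)
      have hEFX' : ∀ p q, ∀ g ∈ X' q, v p (X' q \ {g}) ≤ v p (X' p) := by
        intro p q g hg
        by_cases hq : q = a
        · rw [hq, hX'a] at hg
          rw [hq, hX'a]
          by_cases hp : p = a
          · rw [hp, hX'a]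
            exact hmono a _ _ sdiff_subset
          · rw [hX'j p hp]
            have hcard : (Z \ {g}).card < Z.card :=
              card_lt_card (sdiff_ssubset (by simpa using hg) (singleton_nonempty g))
            exact hmin p (Z \ {g}) ((sdiff_subset).trans hZP) hcard
        · rw [hX'j q hq] at hg ⊢
          by_cases hp : p = a
          · rw [hp, hX'a]
            exact (hEFX a q g hg).trans (le_of_lt haZ)
          · rw [hX'j p hp]
            exact hEFX p q g hg
      -- the measure strictly decreases
      have hsum : ∑ j, v j (X' j) = (∑ j ∈ univ \ {a}, v j (X j)) + v a Z := by
        rw [Finset.sum_eq_sum_sdiff_singleton_add (mem_univ a) (fun j => v j (X' j)), hX'a]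
        congr 1
        refine Finset.sum_congr rfl (fun j hj => ?_)
        rw [hX'j j (by rw [mem_sdiff, mem_singleton] at hj; exact hj.2)]
      have hsumX : ∑ j, v j (X j) = (∑ j ∈ univ \ {a}, v j (X j)) + v a (X a) :=
        Finset.sum_eq_sum_sdiff_singleton_add (mem_univ a) (fun j => v j (X j))
      have hΦ : ∑ j, v j (X j) < ∑ j, v j (X' j) := by
        rw [hsum, hsumX]
        exact add_lt_add_right haZ _
      set Vals := (Fintype.piFinset (fun _ : Fin n => M.powerset)).image
          (fun Y => ∑ i, v i (Y i)) with hVals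
      have hmemV : (∑ j, v j (X' j)) ∈ Vals := by
        rw [hVals]
        refine mem_image.mpr ⟨X', ?_, rfl⟩
        rw [Fintype.mem_piFinset]
        intro j
        exact mem_powerset.mpr (hX'M j)
      have hmeas : (Vals.filter (fun t => ∑ j, v j (X' j) < t)).card <
          (Vals.filter (fun t => ∑ j, v j (X j) < t)).card := by
        apply card_lt_card
        constructor
        · intro t ht
          rw [mem_filter] at ht ⊢
          exact ⟨ht.1, hΦ.trans ht.2⟩
        · intro hsub
          have h1 : (∑ j, v j (X' j)) ∈ Vals.filter (fun t => ∑ j, v j (X j) < t) :=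
            mem_filter.mpr ⟨hmemV, hΦ⟩
          have h2 := hsub h1
          rw [mem_filter] at h2
          exact lt_irrefl _ h2.2
      have hklt : (Vals.filter (fun t => ∑ j, v j (X' j) < t)).card < k :=
        lt_of_lt_of_le hmeas hk
      exact IH _ hklt X' P' hX'M hP'M hdisj' hdisjP' hcover' hX0' hEFX' le_rfl

/-- If among `n ≥ 2` agents with normalized monotone valuations there is one agent who
values every subset of goods at zero, then a complete EFX allocation always exists. -/
theorem complete_efx_with_indifferent_agent
    {G : Type} [DecidableEq G] (M : Finset G) (n : ℕ) (hn : 2 ≤ n)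
    (v : Fin n → Finset G → ℝ)
    (hnorm : ∀ i, v i ∅ = 0)
    (hmono : ∀ i, ∀ S T : Finset G, S ⊆ T → v i S ≤ v i T)
    (i₀ : Fin n) (hi₀ : ∀ S : Finset G, S ⊆ M → v i₀ S = 0) :
    ∃ X : Fin n → Finset G,
      (∀ i j, i ≠ j → Disjoint (X i) (X j)) ∧
      Finset.univ.biUnion X = M ∧
      (∀ i j : Fin n, ∀ g ∈ X j, v i (X j \ {g}) ≤ v i (X i)) := by
  classical
  obtain ⟨X', P', hX'M, hP'M, hdisj, hdisjP, hcover, hX0, hEFX, hnoenvy⟩ :=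
    efx_aux M n v hmono i₀ hi₀ _ (fun _ => ∅) M
      (fun _ => empty_subset M) (subset_refl M)
      (fun _ _ _ => disjoint_empty_left _)
      (fun _ => disjoint_empty_left _)
      (fun g hg => Or.inl hg) rfl
      (fun i j g hg => absurd hg (Finset.notMem_empty g)) le_rfl
  set Y : Fin n → Finset G := fun j => if j = i₀ then P' else X' j with hY
  have hYi₀ : Y i₀ = P' := by simp [hY]
  have hYj : ∀ j, j ≠ i₀ → Y j = X' j := fun j hj => by simp [hY, hj]
  have hYM : ∀ j, Y j ⊆ M := by
    intro j
    by_cases h : j = i₀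
    · rw [h, hYi₀]; exact hP'M
    · rw [hYj j h]; exact hX'M j
  refine ⟨Y, ?_, ?_, ?_⟩
  · intro i j hij
    by_cases hi : i = i₀
    · have hj : j ≠ i₀ := fun h => hij (hi.trans h.symm)
      rw [hi, hYi₀, hYj j hj]
      exact (hdisjP j).symm
    · rw [hYj i hi]
      by_cases hj : j = i₀
      · rw [hj, hYi₀]
        exact hdisjP i
      · rw [hYj j hj]
        exact hdisj i j hij
  · ext g
    simp only [Finset.mem_biUnion, Finset.mem_univ, true_and]
    constructor
    · rintro ⟨j, hj⟩
      exact hYM j hj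
    · intro hg
      rcases hcover g hg with hgP | ⟨j, hgX⟩
      · exact ⟨i₀, by rw [hYi₀]; exact hgP⟩
      · have hj : j ≠ i₀ := by
          intro h; rw [h, hX0] at hgX; exact Finset.notMem_empty g hgX
        exact ⟨j, by rw [hYj j hj]; exact hgX⟩
  · intro i j g hg
    by_cases hi : i = i₀
    · rw [hi, hYi₀, hi₀ _ ((sdiff_subset).trans (hYM j)), hi₀ _ hP'M]
    · rw [hYj i hi]
      by_cases hj : j = i₀
      · rw [hj, hYi₀] at hg ⊢
        exact hnoenvy i (P' \ {g}) sdiff_subset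
      · rw [hYj j hj] at hg ⊢
        exact hEFX i j g hg
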